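/- Let F be a correspondence from X to Y with Gr(f) ⊆ F for a continuous map f: X → Y. If F is homologically consistent (q_*(ker p_*) = 0), then F is homologically complete (p_* surjective), F_* = q_* ∘ p_*^{-1} is well-defined, and F_* = f_*. -/

import Mathlib

open CategoryTheory

/-- Singular homology in degree `k`, with coefficients in the field `K`: the composite of the
singular simplicial set functor, the free `K`-module functor, the alternating face map
complex, and homology of chain complexes. -/
noncomputable def SingH (K : Type) [Field K] (k : ℕ) : TopCat.{0} ⥤ ModuleCat.{0} K :=
  TopCat.toSSet ⋙ ((SimplicialObject.whiskering _ _).obj (ModuleCat.free K)) ⋙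
    AlgebraicTopology.alternatingFaceMapComplex _ ⋙
    HomologicalComplex.homologyFunctor _ _ k

variable (X Y : Type) [TopologicalSpace X] [TopologicalSpace Y]

/-- The first projection of a correspondence `F ⊆ X × Y`, as a map of spaces. -/
def projX (F : Set (X × Y)) : TopCat.of F ⟶ TopCat.of X :=
  TopCat.ofHom ⟨fun z => z.1.1, continuous_fst.comp continuous_subtype_val⟩

/-- The second projection of a correspondence `F ⊆ X × Y`, as a map of spaces. -/
def projY (F : Set (X × Y)) : TopCat.of F ⟶ TopCat.of Y :=
  TopCat.ofHom ⟨fun z => z.1.2, continuous_snd.comp continuous_subtype_val⟩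

/-- Let `F ⊆ X × Y` be a correspondence containing the graph of a
continuous map `f : X → Y`.  If `F` is homologically consistent (`q₋ (ker p₋) = 0`), then
`F` is homologically complete (`p₋` surjective), so `F₋ = q₋ ∘ p₋⁻¹` is well-defined, and
`F₋ = f₋` (equivalently `q₋ = f₋ ∘ p₋`). -/
theorem correspondence_containing_graph
    (K : Type) [Field K] (k : ℕ) (f : X → Y) (hf : Continuous f)
    (F : Set (X × Y)) (hgraph : ∀ x : X, (x, f x) ∈ F)
    (hconsistent : ∀ u, (SingH K k).map (projX X Y F) u = 0 →
      (SingH K k).map (projY X Y F) u = 0) :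
    Function.Surjective ((SingH K k).map (projX X Y F)) ∧
    (SingH K k).map (projY X Y F) =
      (SingH K k).map (projX X Y F) ≫
        (SingH K k).map (TopCat.ofHom ⟨f, hf⟩ : TopCat.of X ⟶ TopCat.of Y) := by
  classical
  set g : TopCat.of X ⟶ TopCat.of F :=
    TopCat.ofHom ⟨fun x => ⟨(x, f x), hgraph x⟩,
      Continuous.subtype_mk (continuous_id.prodMk hf) _⟩ with hg
  have h1 : g ≫ projX X Y F = 𝟙 (TopCat.of X) := rfl
  have h2 : g ≫ projY X Y F = (TopCat.ofHom ⟨f, hf⟩ : TopCat.of X ⟶ TopCat.of Y) := rfl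
  have H1 : ∀ v, (SingH K k).map (projX X Y F) ((SingH K k).map g v) = v := by
    intro v
    have : (SingH K k).map g ≫ (SingH K k).map (projX X Y F) = 𝟙 _ := by
      rw [← Functor.map_comp, h1, CategoryTheory.Functor.map_id]
    have := ConcreteCategory.congr_hom this v
    simpa using this
  have H2 : ∀ v, (SingH K k).map (projY X Y F) ((SingH K k).map g v) =
      (SingH K k).map (TopCat.ofHom ⟨f, hf⟩ : TopCat.of X ⟶ TopCat.of Y) v := by
    intro v
    have : (SingH K k).map g ≫ (SingH K k).map (projY X Y F) =
        (SingH K k).map (TopCat.ofHom ⟨f, hf⟩ : TopCat.of X ⟶ TopCat.of Y) := by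
      rw [← Functor.map_comp, h2]
    have := ConcreteCategory.congr_hom this v
    simpa using this
  refine ⟨fun v => ⟨(SingH K k).map g v, H1 v⟩, ?_⟩
  ext u
  have key : (SingH K k).map (projX X Y F)
      (u - (SingH K k).map g ((SingH K k).map (projX X Y F) u)) = 0 := by
    rw [map_sub, H1, sub_self]
  have hq := hconsistent _ key
  rw [map_sub, sub_eq_zero] at hq
  simpa [H2] using hq
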